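/- Let $M$ be a module over the polynomial ring $\mathbb{Q}[\t]$, and let $\delta_n, \bar\delta_n \in M$ for $n \ge 1$ and $\partial_{k,Q}, \partial_{k,P} \in M$ for $k \ge 0$ satisfy, as identities of formal power series in $z$ with coefficients in $M$ (where for each integer $m \ge 1$ the series $m + z\t$ is invertible in $\mathbb{Q}[\t][[z]]$): $\sum_{k\ge0} z^{k+1}\,\partial_{k,Q} = \sum_{n\ge1} z^n\,\Big(\prod_{m=1}^{n}(m+z\t)\Big)^{-1}\delta_n$ and $\sum_{k\ge0} z^{k+1}\,(\partial_{k,Q} - \t\,\partial_{k,P}) = \sum_{n\ge1} z^n\,\Big(\prod_{m=1}^{n}(m-z\t)\Big)^{-1}\bar\delta_n$. Set $\delta_0 = \bar\delta_0 = 0$, and let $c_k = 1 + \tfrac12 + \cdots + \tfrac1k$ (with $c_0 = 0$). Then for every $k \ge 0$: $\t\,\partial_{k,P} \;-\; \tfrac{1}{(k+1)!}\,(\delta_{k+1} - \bar\delta_{k+1}) \;+\; \t\,\tfrac{c_k}{k!}\,(\delta_k + \bar\delta_k) \;\in\; \t^2 M$. -/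

import Mathlib

open PowerSeries Polynomial

/-- The product `(1 + εz𝗍)(2 + εz𝗍)⋯(n + εz𝗍)` in `ℚ[𝗍][[z]]` with sign `ε = ±1`,
where `𝗍 = Polynomial.X` and `z = PowerSeries.X`.  Each factor `m ± z𝗍` (for `m ≥ 1`)
is invertible in `ℚ[𝗍][[z]]`, so `Ring.inverse` of this product is its genuine
inverse. -/
noncomputable def todaSignedFactorialProd (ε : ℤ) (n : ℕ) :
    PowerSeries (Polynomial ℚ) :=
  ∏ m ∈ Finset.range n,
    (PowerSeries.C ((m + 1 : ℕ) : Polynomial ℚ) +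
      (ε : PowerSeries (Polynomial ℚ)) *
        PowerSeries.X * PowerSeries.C Polynomial.X)

noncomputable def qprod (ε : ℤ) (n : ℕ) : PowerSeries ℚ :=
  ∏ m ∈ Finset.range n,
    (PowerSeries.C ((m + 1 : ℕ) : ℚ) + (ε : PowerSeries ℚ) * PowerSeries.X)

lemma ringHom_ring_inverse {R S : Type*} [CommRing R] [CommRing S] (f : R →+* S)
    {a : R} (h : IsUnit a) : f (Ring.inverse a) = Ring.inverse (f a) := by
  obtain ⟨u, rfl⟩ := h
  have h1 : f ↑u = ((Units.map (f : R →* S)) u : Sˣ) := rfl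
  rw [Ring.inverse_unit, h1, Ring.inverse_unit]
  exact (Units.coe_map_inv (f : R →* S) u).symm

lemma qprod_const (ε : ℤ) (n : ℕ) :
    PowerSeries.constantCoeff (qprod ε n) = (n.factorial : ℚ) := by
  induction n with
  | zero => simp [qprod]
  | succ n ih =>
    rw [qprod, Finset.prod_range_succ, map_mul, ← qprod, ih]
    simp [Nat.factorial_succ]
    ring

lemma coeff_one_mul' (f g : PowerSeries ℚ) :
    PowerSeries.coeff 1 (f * g) =
      PowerSeries.constantCoeff f * PowerSeries.coeff 1 g +
      PowerSeries.coeff 1 f * PowerSeries.constantCoeff g := by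
  rw [PowerSeries.coeff_mul, show (1 : ℕ) = 0 + 1 from rfl, Finset.Nat.antidiagonal_succ,
    Finset.sum_cons, Finset.Nat.antidiagonal_zero, Finset.sum_map, Finset.sum_singleton]
  simp [PowerSeries.coeff_zero_eq_constantCoeff]

lemma epsC (ε : ℤ) : ((ε : ℤ) : PowerSeries ℚ) = PowerSeries.C ((ε : ℤ) : ℚ) := by
  simp [map_intCast]

lemma qprod_coeff_one (ε : ℤ) (n : ℕ) :
    PowerSeries.coeff 1 (qprod ε n) =
      (ε : ℚ) * (n.factorial : ℚ) * (∑ j ∈ Finset.range n, ((j : ℚ) + 1)⁻¹) := by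
  induction n with
  | zero => simp [qprod]
  | succ n ih =>
    rw [qprod, Finset.prod_range_succ, ← qprod, coeff_one_mul', ih, qprod_const,
      Finset.sum_range_succ]
    have h1 : PowerSeries.coeff 1
        (PowerSeries.C ((n + 1 : ℕ) : ℚ) + (ε : PowerSeries ℚ) * PowerSeries.X) = (ε : ℚ) := by
      rw [epsC, map_add, PowerSeries.coeff_C]
      simp [PowerSeries.coeff_C_mul, PowerSeries.coeff_one_X]
    have h0 : PowerSeries.constantCoeff
        (PowerSeries.C ((n + 1 : ℕ) : ℚ) + (ε : PowerSeries ℚ) * PowerSeries.X) =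
        ((n + 1 : ℕ) : ℚ) := by
      rw [epsC]; simp
    rw [h1, h0, Nat.factorial_succ]
    have hne : ((n : ℚ) + 1) ≠ 0 := by positivity
    push_cast
    field_simp
    ring

lemma qprod_isUnit (ε : ℤ) (n : ℕ) : IsUnit (qprod ε n) := by
  have hu : PowerSeries.constantCoeff (qprod ε n) =
      (Units.mk0 ((n.factorial : ℚ)) (by exact_mod_cast n.factorial_ne_zero) : ℚˣ) :=
    qprod_const ε n
  exact IsUnit.of_mul_eq_one _ (PowerSeries.mul_invOfUnit _ _ hu)

lemma qprod_inv_coeff_zero (ε : ℤ) (n : ℕ) :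
    PowerSeries.coeff 0 (Ring.inverse (qprod ε n)) = ((n.factorial : ℚ))⁻¹ := by
  have h := Ring.inverse_mul_cancel _ (qprod_isUnit ε n)
  have h0 := congrArg (PowerSeries.constantCoeff) h
  rw [map_mul, qprod_const, map_one] at h0
  rw [PowerSeries.coeff_zero_eq_constantCoeff]
  field_simp at h0 ⊢
  linarith [h0]

lemma qprod_inv_coeff_one (ε : ℤ) (n : ℕ) :
    PowerSeries.coeff 1 (Ring.inverse (qprod ε n)) =
      -(ε : ℚ) * (∑ j ∈ Finset.range n, ((j : ℚ) + 1)⁻¹) / (n.factorial : ℚ) := by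
  have h := Ring.inverse_mul_cancel _ (qprod_isUnit ε n)
  have h1 := congrArg (PowerSeries.coeff 1) h
  rw [coeff_one_mul', qprod_coeff_one, qprod_const, PowerSeries.coeff_one] at h1
  have hc0 : PowerSeries.constantCoeff (Ring.inverse (qprod ε n)) = ((n.factorial : ℚ))⁻¹ := by
    rw [← PowerSeries.coeff_zero_eq_constantCoeff_apply]; exact qprod_inv_coeff_zero ε n
  rw [hc0] at h1
  have hne : (n.factorial : ℚ) ≠ 0 := by exact_mod_cast n.factorial_ne_zero
  have h2 : (n.factorial : ℚ) * ((PowerSeries.coeff 1 (Ring.inverse (qprod ε n))) *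
      (n.factorial : ℚ)) =
      (n.factorial : ℚ) * (-(ε : ℚ) * ∑ j ∈ Finset.range n, ((j : ℚ) + 1)⁻¹) := by
    norm_num at h1
    field_simp at h1
    simp only [one_div] at h1
    linear_combination (n.factorial : ℚ) * h1
  have h3 := mul_left_cancel₀ hne h2
  rw [eq_div_iff hne]
  linear_combination h3

noncomputable def bridge : PowerSeries ℚ →+* PowerSeries (Polynomial ℚ) :=
  (PowerSeries.rescale (Polynomial.X : Polynomial ℚ)).comp
    (PowerSeries.map (Polynomial.C : ℚ →+* Polynomial ℚ))

lemma rescale_C' (a : Polynomial ℚ) (r : Polynomial ℚ) :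
    PowerSeries.rescale a (PowerSeries.C r) = PowerSeries.C r := by
  refine PowerSeries.ext fun k => ?_
  rw [PowerSeries.coeff_rescale, PowerSeries.coeff_C]
  split_ifs with h
  · subst h; simp
  · simp

lemma toda_eq_bridge (ε : ℤ) (n : ℕ) :
    todaSignedFactorialProd ε n = bridge (qprod ε n) := by
  rw [qprod, todaSignedFactorialProd, map_prod]
  refine Finset.prod_congr rfl fun m _ => ?_
  rw [map_add, map_mul, map_intCast]
  have hC : bridge (PowerSeries.C ((m + 1 : ℕ) : ℚ)) =
      PowerSeries.C ((m + 1 : ℕ) : Polynomial ℚ) := by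
    rw [bridge, RingHom.comp_apply, PowerSeries.map_C, rescale_C']
    norm_cast
  have hX : bridge PowerSeries.X =
      PowerSeries.C Polynomial.X * PowerSeries.X := by
    rw [bridge, RingHom.comp_apply, PowerSeries.map_X, PowerSeries.rescale_X]
  rw [hC, hX]
  ring

lemma toda_inv_coeff (ε : ℤ) (n r : ℕ) :
    PowerSeries.coeff r (Ring.inverse (todaSignedFactorialProd ε n)) =
      Polynomial.X ^ r *
        Polynomial.C (PowerSeries.coeff r (Ring.inverse (qprod ε n))) := by
  rw [toda_eq_bridge, ← ringHom_ring_inverse bridge (qprod_isUnit ε n), bridge,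
    RingHom.comp_apply, PowerSeries.coeff_rescale, PowerSeries.coeff_map]

set_option maxHeartbeats 1000000 in
lemma key_sum (M : Type*) [AddCommGroup M] [Module (Polynomial ℚ) M]
    (v : ℕ → M) (hv0 : v 0 = 0) (ε : ℤ) (k : ℕ) :
    ∃ m : M,
      (∑ n ∈ Finset.Icc 1 (k + 1),
          (PowerSeries.coeff (k + 1 - n)
            (Ring.inverse (todaSignedFactorialProd ε n))) • v n)
        - Polynomial.C (((k + 1).factorial : ℚ)⁻¹) • v (k + 1)
        + ((ε : Polynomial ℚ) * (Polynomial.X *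
            Polynomial.C ((∑ j ∈ Finset.range k, ((j : ℚ) + 1)⁻¹) / (k.factorial : ℚ)))) • v k
        = ((Polynomial.X : Polynomial ℚ) ^ 2) • m := by
  set S : ℚ := ∑ j ∈ Finset.range k, ((j : ℚ) + 1)⁻¹ with hS
  set F : ℕ → Polynomial ℚ := fun n =>
    PowerSeries.coeff (k + 1 - n)
      (Ring.inverse (todaSignedFactorialProd ε n)) with hF
  have hrange : ∑ n ∈ Finset.Icc 1 (k + 1), F n • v n =
      ∑ n ∈ Finset.range (k + 2), F n • v n := by
    have hins : Finset.range (k + 2) = insert 0 (Finset.Icc 1 (k + 1)) := by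
      ext x; simp [Finset.mem_range, Finset.mem_Icc]; omega
    rw [hins, Finset.sum_insert (by simp), hv0, smul_zero, zero_add]
  have hsplit : ∑ n ∈ Finset.range (k + 2), F n • v n =
      (∑ n ∈ Finset.range k, F n • v n) + F k • v k + F (k + 1) • v (k + 1) := by
    rw [Finset.sum_range_succ, Finset.sum_range_succ]
  -- compute F (k+1)
  have hFk1 : F (k + 1) = Polynomial.C (((k + 1).factorial : ℚ)⁻¹) := by
    rw [hF]
    simp only [Nat.add_sub_cancel_left, Nat.sub_self]
    rw [toda_inv_coeff, qprod_inv_coeff_zero]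
    simp
  -- compute F k
  have hFk : F k = Polynomial.X * Polynomial.C (-(ε : ℚ) * S / (k.factorial : ℚ)) := by
    rw [hF]
    have h1 : k + 1 - k = 1 := by omega
    simp only [h1]
    rw [toda_inv_coeff, qprod_inv_coeff_one, ← hS]
    ring
  have hcancel : Polynomial.X * Polynomial.C (-(ε : ℚ) * S / (k.factorial : ℚ)) +
      ((ε : Polynomial ℚ) * (Polynomial.X * Polynomial.C (S / (k.factorial : ℚ)))) = 0 := by
    have he : ((ε : ℤ) : Polynomial ℚ) = Polynomial.C ((ε : ℤ) : ℚ) := by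
      simp [map_intCast]
    have h0 : -(ε : ℚ) * S / (k.factorial : ℚ) + (ε : ℚ) * (S / (k.factorial : ℚ)) = 0 := by
      ring
    calc Polynomial.X * Polynomial.C (-(ε : ℚ) * S / (k.factorial : ℚ)) +
        ((ε : Polynomial ℚ) * (Polynomial.X * Polynomial.C (S / (k.factorial : ℚ))))
        = Polynomial.X * Polynomial.C (-(ε : ℚ) * S / (k.factorial : ℚ) +
            (ε : ℚ) * (S / (k.factorial : ℚ))) := by
          rw [Polynomial.C_add, Polynomial.C_mul, he]; ring
      _ = 0 := by rw [h0]; simp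
  have hterm : ∀ n ∈ Finset.range k, F n • v n =
      ((Polynomial.X : Polynomial ℚ) ^ 2) •
        ((Polynomial.X ^ (k - 1 - n) *
          Polynomial.C (PowerSeries.coeff (k + 1 - n) (Ring.inverse (qprod ε n)))) • v n) := by
    intro n hn
    rw [Finset.mem_range] at hn
    rw [hF]
    dsimp only
    rw [toda_inv_coeff, smul_smul]
    congr 1
    rw [← mul_assoc, ← pow_add]
    congr 2
    omega
  refine ⟨∑ n ∈ Finset.range k,
    (Polynomial.X ^ (k - 1 - n) *
      Polynomial.C (PowerSeries.coeff (k + 1 - n) (Ring.inverse (qprod ε n)))) • v n, ?_⟩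
  rw [hrange, hsplit, hFk1, hFk, Finset.sum_congr rfl hterm, ← Finset.smul_sum]
  have habel : ∀ (a b c d : M), (a + b + c) - c + d = a + (b + d) := by
    intro a b c d; abel
  rw [habel, ← add_smul, hcancel, zero_smul, add_zero]

/-- for a module `M` over `ℚ[𝗍]`, if the flows satisfy the
coefficientwise power-series identities
`∑_{k≥0} z^{k+1} ∂_{k,Q} = ∑_{n≥1} z^n ((1+z𝗍)⋯(n+z𝗍))⁻¹ δ_n` and
`∑_{k≥0} z^{k+1} (∂_{k,Q} - 𝗍 ∂_{k,P}) = ∑_{n≥1} z^n ((1-z𝗍)⋯(n-z𝗍))⁻¹ δ̄_n`,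
with `δ_0 = δ̄_0 = 0`, then for every `k ≥ 0`
`𝗍 ∂_{k,P} - (1/(k+1)!)(δ_{k+1} - δ̄_{k+1}) + 𝗍 (c_k/k!)(δ_k + δ̄_k) ∈ 𝗍² M`,
where `c_k = 1 + 1/2 + ⋯ + 1/k` is the harmonic number. -/
theorem toda_descendent_P_flow (M : Type*) [AddCommGroup M]
    [Module (Polynomial ℚ) M] (dQ dP : ℕ → M) (δ δb : ℕ → M)
    (hδ0 : δ 0 = 0) (hδb0 : δb 0 = 0)
    (hQ : ∀ j : ℕ, (if j = 0 then (0 : M) else dQ (j - 1)) =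
      ∑ n ∈ Finset.Icc 1 j,
        (PowerSeries.coeff (j - n)
          (Ring.inverse (todaSignedFactorialProd 1 n))) • δ n)
    (hQP : ∀ j : ℕ, (if j = 0 then (0 : M)
        else dQ (j - 1) - (Polynomial.X : Polynomial ℚ) • dP (j - 1)) =
      ∑ n ∈ Finset.Icc 1 j,
        (PowerSeries.coeff (j - n)
          (Ring.inverse (todaSignedFactorialProd (-1) n))) • δb n) :
    ∀ k : ℕ, ∃ m : M,
      (Polynomial.X : Polynomial ℚ) • dP k -
        Polynomial.C (((k + 1).factorial : ℚ)⁻¹) • (δ (k + 1) - δb (k + 1)) +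
        (Polynomial.X *
          Polynomial.C ((∑ j ∈ Finset.range k, ((j : ℚ) + 1)⁻¹) / (k.factorial : ℚ)))
          • (δ k + δb k) =
        ((Polynomial.X : Polynomial ℚ) ^ 2) • m := by
  intro k
  have h1 := hQ (k + 1)
  have h2 := hQP (k + 1)
  simp only [Nat.succ_ne_zero, if_false, Nat.add_sub_cancel] at h1 h2
  obtain ⟨m₁, hm₁⟩ := key_sum M δ hδ0 1 k
  obtain ⟨m₂, hm₂⟩ := key_sum M δb hδb0 (-1) k
  refine ⟨m₁ - m₂, ?_⟩
  have hkey : (Polynomial.X : Polynomial ℚ) • dP k =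
      (∑ n ∈ Finset.Icc 1 (k + 1),
        (PowerSeries.coeff (k + 1 - n)
          (Ring.inverse (todaSignedFactorialProd 1 n))) • δ n) -
      (∑ n ∈ Finset.Icc 1 (k + 1),
        (PowerSeries.coeff (k + 1 - n)
          (Ring.inverse (todaSignedFactorialProd (-1) n))) • δb n) := by
    rw [← h1, ← h2]; abel
  have he1 : ((1 : ℤ) : Polynomial ℚ) = 1 := by norm_cast
  have he2 : ((-1 : ℤ) : Polynomial ℚ) = -1 := by norm_cast
  rw [he1, one_mul] at hm₁
  rw [he2, neg_one_mul, neg_smul] at hm₂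
  rw [hkey, smul_sub, smul_add, smul_sub]
  have h3 := congrArg₂ (· - ·) hm₁ hm₂
  rw [← h3]
  abel
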